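/- Let L > 0, ν ≥ 0, and let m : [0,∞) × [0,L] → ℝ³ be twice continuously differentiable in (t,x) and satisfy the uncontrolled Landau–Lifshitz equation ∂m/∂t = m × m_xx − ν m × (m × m_xx) on [0,∞) × [0,L] together with the Neumann boundary conditions m_x(t,0) = m_x(t,L) = 0 for all t ≥ 0. Then for every t ≥ 0, the Lyapunov function V(t) = (1/2)∫₀ᴸ ‖m_x(t,x)‖₂² dx satisfies dV/dt = −ν ∫₀ᴸ ‖m(t,x) × m_xx(t,x)‖₂² dx ≤ 0. (The key computation in the paper's Theorem 2.3 on asymptotic stability of the equilibrium set.) -/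

import Mathlib

/-- Cross product on `ℝ³ = EuclideanSpace ℝ (Fin 3)`. -/
noncomputable def cross3 (u v : EuclideanSpace ℝ (Fin 3)) : EuclideanSpace ℝ (Fin 3) :=
  (WithLp.equiv 2 (Fin 3 → ℝ)).symm
    ![u 1 * v 2 - u 2 * v 1, u 2 * v 0 - u 0 * v 2, u 0 * v 1 - u 1 * v 0]

/-- Second spatial derivative `m_xx` of `m(t, x)`. -/
noncomputable def mxx (m : ℝ → ℝ → EuclideanSpace ℝ (Fin 3)) (t x : ℝ) :
    EuclideanSpace ℝ (Fin 3) :=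
  deriv (deriv (m t)) x

open scoped RealInnerProductSpace

section Aux

variable {E : Type*} [NormedAddCommGroup E] [NormedSpace ℝ E]

lemma LLaux.inner_cross3_right (u v : EuclideanSpace ℝ (Fin 3)) : ⟪v, cross3 u v⟫ = 0 := by
  simp [cross3, PiLp.inner_apply, Fin.sum_univ_three, RCLike.inner_apply]
  ring

lemma LLaux.inner_cross3_cross3 (u v : EuclideanSpace ℝ (Fin 3)) :
    ⟪v, cross3 u (cross3 u v)⟫ = -‖cross3 u v‖ ^ 2 := by
  rw [← real_inner_self_eq_norm_sq]
  simp [cross3, PiLp.inner_apply, Fin.sum_univ_three, RCLike.inner_apply]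
  rw [EuclideanSpace.norm_sq_eq]
  simp [Fin.sum_univ_three]
  ring

lemma LLaux.hasDerivAt_x (G : ℝ × ℝ → E) (hG : Differentiable ℝ G) (t x : ℝ) :
    HasDerivAt (fun y => G (t, y)) (fderiv ℝ G (t, x) (0, 1)) x :=
  (hG (t, x)).hasFDerivAt.comp_hasDerivAt x
    ((hasDerivAt_const x t).prodMk (hasDerivAt_id x))

lemma LLaux.hasDerivAt_t (G : ℝ × ℝ → E) (hG : Differentiable ℝ G) (t x : ℝ) :
    HasDerivAt (fun s => G (s, x)) (fderiv ℝ G (t, x) (1, 0)) t :=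
  (hG (t, x)).hasFDerivAt.comp_hasDerivAt t
    ((hasDerivAt_id t).prodMk (hasDerivAt_const t x))

lemma LLaux.mixed_symm (M : ℝ × ℝ → E) (hM : ContDiff ℝ 2 M) (p : ℝ × ℝ) :
    fderiv ℝ (fun q => fderiv ℝ M q ((0 : ℝ), (1 : ℝ))) p (1, 0)
      = fderiv ℝ (fun q => fderiv ℝ M q ((1 : ℝ), (0 : ℝ))) p (0, 1) := by
  have hd : Differentiable ℝ (fderiv ℝ M) :=
    (hM.fderiv_right (le_refl _)).differentiable one_ne_zero
  have h1 : ∀ v : ℝ × ℝ, fderiv ℝ (fun q => fderiv ℝ M q v) p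
      = (ContinuousLinearMap.apply ℝ E v).comp (fderiv ℝ (fderiv ℝ M) p) := by
    intro v
    have : HasFDerivAt (fun q => fderiv ℝ M q v)
        ((ContinuousLinearMap.apply ℝ E v).comp (fderiv ℝ (fderiv ℝ M) p)) p :=
      (ContinuousLinearMap.apply ℝ E v).hasFDerivAt.comp p (hd p).hasFDerivAt
    exact this.fderiv
  rw [h1, h1]
  have symm := second_derivative_symmetric (f := M) (f' := fderiv ℝ M)
    (f'' := fderiv ℝ (fderiv ℝ M) p)
    (fun y => (hM.differentiable (by norm_num) y).hasFDerivAt) (hd p).hasFDerivAt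
  simpa using (symm (0, 1) (1, 0)).symm

end Aux

/-- Along C² solutions of the uncontrolled Landau–Lifshitz equation with
Neumann boundary conditions on `[0, L]`, the Lyapunov function
`V(t) = (1/2)∫₀ᴸ ‖m_x‖² dx` satisfies
`dV/dt = −ν ∫₀ᴸ ‖m × m_xx‖² dx ≤ 0` for every `t ≥ 0`. -/
theorem landau_lifshitz_lyapunov_decay
    (L ν : ℝ) (hL : 0 < L) (hν : 0 ≤ ν)
    (m : ℝ → ℝ → EuclideanSpace ℝ (Fin 3))
    (hsmooth : ContDiff ℝ 2 (fun p : ℝ × ℝ => m p.1 p.2))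
    (hpde : ∀ t x : ℝ, 0 ≤ t → x ∈ Set.Icc (0 : ℝ) L →
      deriv (fun s => m s x) t
        = cross3 (m t x) (mxx m t x)
          - ν • cross3 (m t x) (cross3 (m t x) (mxx m t x)))
    (hbc : ∀ t : ℝ, 0 ≤ t → deriv (m t) 0 = 0 ∧ deriv (m t) L = 0) :
    ∀ t : ℝ, 0 ≤ t →
      HasDerivWithinAt (fun s => (1 / 2) * ∫ x in (0 : ℝ)..L, ‖deriv (m s) x‖ ^ 2)
        (-ν * ∫ x in (0 : ℝ)..L, ‖cross3 (m t x) (mxx m t x)‖ ^ 2) (Set.Ici (0 : ℝ)) t ∧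
      -ν * ∫ x in (0 : ℝ)..L, ‖cross3 (m t x) (mxx m t x)‖ ^ 2 ≤ 0 := by
  intro t ht
  set M : ℝ × ℝ → EuclideanSpace ℝ (Fin 3) := fun p => m p.1 p.2 with hMdef
  have hM : ContDiff ℝ 2 M := hsmooth
  have hMdiff : Differentiable ℝ M := hM.differentiable (by norm_num)
  set D1 : ℝ × ℝ → EuclideanSpace ℝ (Fin 3) := fun p => fderiv ℝ M p (1, 0) with hD1def
  set D2 : ℝ × ℝ → EuclideanSpace ℝ (Fin 3) := fun p => fderiv ℝ M p (0, 1) with hD2def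
  have hD1c : ContDiff ℝ 1 D1 := (hM.fderiv_right (by norm_num)).clm_apply contDiff_const
  have hD2c : ContDiff ℝ 1 D2 := (hM.fderiv_right (by norm_num)).clm_apply contDiff_const
  have hD1diff : Differentiable ℝ D1 := hD1c.differentiable one_ne_zero
  have hD2diff : Differentiable ℝ D2 := hD2c.differentiable one_ne_zero
  set D12 : ℝ × ℝ → EuclideanSpace ℝ (Fin 3) := fun p => fderiv ℝ D1 p (0, 1) with hD12def
  set D22 : ℝ × ℝ → EuclideanSpace ℝ (Fin 3) := fun p => fderiv ℝ D2 p (0, 1) with hD22def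
  have hD12cont : Continuous D12 :=
    ((hD1c.fderiv_right (m := 0) (by norm_num)).clm_apply contDiff_const).continuous
  have hD22cont : Continuous D22 :=
    ((hD2c.fderiv_right (m := 0) (by norm_num)).clm_apply contDiff_const).continuous
  have hcurve : ∀ s : ℝ, Continuous fun x : ℝ => (s, x) :=
    fun s => continuous_const.prodMk continuous_id
  have hcont2 : Continuous D2 := hD2c.continuous
  -- basic derivative identities
  have hder2 : ∀ s x : ℝ, deriv (m s) x = D2 (s, x) := fun s x =>
    (LLaux.hasDerivAt_x M hMdiff s x).deriv
  have hder1 : ∀ s x : ℝ, deriv (fun s' => m s' x) s = D1 (s, x) := fun s x =>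
    (LLaux.hasDerivAt_t M hMdiff s x).deriv
  have hmxx : ∀ s x : ℝ, mxx m s x = D22 (s, x) := by
    intro s x
    unfold mxx
    have h1 : deriv (m s) = fun y => D2 (s, y) := funext fun y => hder2 s y
    rw [h1]
    exact (LLaux.hasDerivAt_x D2 hD2diff s x).deriv
  -- symmetry of mixed partials : ∂ₜ D2 = D12
  have hsymm : ∀ p : ℝ × ℝ, fderiv ℝ D2 p (1, 0) = D12 p := fun p =>
    LLaux.mixed_symm M hM p
  -- time derivative of ‖m_x‖² at any (s, x)
  have hFdiff : ∀ s x : ℝ,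
      HasDerivAt (fun s' => ‖D2 (s', x)‖ ^ 2) (2 * ⟪D2 (s, x), D12 (s, x)⟫) s := by
    intro s x
    have h : HasDerivAt (fun s' => D2 (s', x)) (D12 (s, x)) s := by
      have := LLaux.hasDerivAt_t D2 hD2diff s x
      rwa [hsymm (s, x)] at this
    have key := (HasDerivAt.inner ℝ h h :
      HasDerivAt (fun s' => ⟪D2 (s', x), D2 (s', x)⟫)
        (⟪D2 (s, x), D12 (s, x)⟫ + ⟪D12 (s, x), D2 (s, x)⟫) s)
    have heq : (fun s' => ‖D2 (s', x)‖ ^ 2) = fun s' => ⟪D2 (s', x), D2 (s', x)⟫ := by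
      funext s'; rw [real_inner_self_eq_norm_sq]
    rw [heq]
    have e : ⟪D2 (s, x), D12 (s, x)⟫ + ⟪D12 (s, x), D2 (s, x)⟫ = 2 * ⟪D2 (s, x), D12 (s, x)⟫ := by
      rw [real_inner_comm (D12 (s, x)) (D2 (s, x))]
      ring
    rwa [e] at key
  -- dominated differentiation under the integral sign
  have hbound : ∃ C : ℝ, ∀ s x : ℝ, s ∈ Set.Icc (t - 1) (t + 1) → x ∈ Set.Icc (0 : ℝ) L →
      ‖2 * ⟪D2 (s, x), D12 (s, x)⟫‖ ≤ C := by
    obtain ⟨C, hC⟩ := (IsCompact.exists_bound_of_continuousOn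
      ((isCompact_Icc (a := t - 1) (b := t + 1)).prod (isCompact_Icc (a := (0:ℝ)) (b := L)))
      (Continuous.continuousOn (continuous_const.mul (Continuous.inner (𝕜 := ℝ) hcont2 hD12cont))))
    exact ⟨C, fun s x hs hx => hC (s, x) (Set.mk_mem_prod hs hx)⟩
  obtain ⟨C, hC⟩ := hbound
  have hDUI : HasDerivAt (fun s => ∫ x in (0 : ℝ)..L, ‖D2 (s, x)‖ ^ 2)
      (∫ x in (0 : ℝ)..L, 2 * ⟪D2 (t, x), D12 (t, x)⟫) t := by
    refine (intervalIntegral.hasDerivAt_integral_of_dominated_loc_of_deriv_le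
      (F := fun s x => ‖D2 (s, x)‖ ^ 2)
      (F' := fun s x => 2 * ⟪D2 (s, x), D12 (s, x)⟫)
      (bound := fun _ => C) (s := Metric.ball t 1) (Metric.ball_mem_nhds t one_pos) ?_ ?_ ?_ ?_ ?_ ?_).2
    · filter_upwards with s
      exact (((hcont2.comp (hcurve s)).norm.pow 2).aestronglyMeasurable)
    · exact ((((hcont2.comp (hcurve t)).norm.pow 2)).intervalIntegrable 0 L)
    · exact ((continuous_const.mul ((hcont2.comp (hcurve t)).inner
        (hD12cont.comp (hcurve t)))).aestronglyMeasurable)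
    · filter_upwards with x hx s hs
      have hx' : x ∈ Set.Icc (0 : ℝ) L := by
        rcases Set.mem_uIoc.1 hx with h | h
        · exact ⟨le_of_lt h.1, h.2⟩
        · exact ⟨by linarith [h.1, h.2], by linarith [h.1, h.2]⟩
      have hs' : s ∈ Set.Icc (t - 1) (t + 1) := by
        rw [Real.ball_eq_Ioo] at hs
        exact ⟨hs.1.le, hs.2.le⟩
      exact hC s x hs' hx'
    · exact intervalIntegrable_const
    · filter_upwards with x hx s hs
      exact hFdiff s x
  -- integration by parts at time t
  set A : ℝ → ℝ := fun x => ⟪D2 (t, x), D12 (t, x)⟫ with hAdef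
  set B : ℝ → ℝ := fun x => ⟪D22 (t, x), D1 (t, x)⟫ with hBdef
  have hAcont : Continuous A :=
    (hcont2.comp (hcurve t)).inner (hD12cont.comp (hcurve t))
  have hBcont : Continuous B :=
    (hD22cont.comp (hcurve t)).inner (hD1c.continuous.comp (hcurve t))
  have hφ : ∀ x : ℝ, HasDerivAt (fun y => ⟪D2 (t, y), D1 (t, y)⟫) (A x + B x) x := by
    intro x
    have h2 : HasDerivAt (fun y => D2 (t, y)) (D22 (t, x)) x :=
      LLaux.hasDerivAt_x D2 hD2diff t x
    have h1 : HasDerivAt (fun y => D1 (t, y)) (D12 (t, x)) x :=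
      LLaux.hasDerivAt_x D1 hD1diff t x
    exact HasDerivAt.inner ℝ h2 h1
  have hIBP : (∫ x in (0 : ℝ)..L, (A x + B x)) = 0 := by
    rw [intervalIntegral.integral_eq_sub_of_hasDerivAt (fun x _ => hφ x)
      ((hAcont.add hBcont).intervalIntegrable 0 L)]
    have hb0 : D2 (t, 0) = 0 := by rw [← hder2 t 0]; exact (hbc t ht).1
    have hbL : D2 (t, L) = 0 := by rw [← hder2 t L]; exact (hbc t ht).2
    rw [hb0, hbL, inner_zero_left, inner_zero_left, sub_zero]
  have hintA : IntervalIntegrable A MeasureTheory.volume 0 L :=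
    hAcont.intervalIntegrable 0 L
  have hintB : IntervalIntegrable B MeasureTheory.volume 0 L :=
    hBcont.intervalIntegrable 0 L
  have hAB : (∫ x in (0 : ℝ)..L, A x) = -(∫ x in (0 : ℝ)..L, B x) := by
    have := intervalIntegral.integral_add hintA hintB
    rw [this] at hIBP
    linarith
  -- rewrite B using the PDE
  have hBval : ∀ x ∈ Set.uIcc (0 : ℝ) L,
      B x = ν * ‖cross3 (m t x) (mxx m t x)‖ ^ 2 := by
    intro x hx
    have hx' : x ∈ Set.Icc (0 : ℝ) L := by rwa [Set.uIcc_of_le hL.le] at hx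
    have hD1val : D1 (t, x) = cross3 (m t x) (mxx m t x)
        - ν • cross3 (m t x) (cross3 (m t x) (mxx m t x)) := by
      rw [← hder1 t x]; exact hpde t x ht hx'
    have hD22val : D22 (t, x) = mxx m t x := (hmxx t x).symm
    rw [hBdef]
    simp only
    rw [hD1val, hD22val, inner_sub_right, real_inner_smul_right,
      LLaux.inner_cross3_right, LLaux.inner_cross3_cross3]
    ring
  have hintBval : (∫ x in (0 : ℝ)..L, B x)
      = ν * ∫ x in (0 : ℝ)..L, ‖cross3 (m t x) (mxx m t x)‖ ^ 2 := by
    rw [intervalIntegral.integral_congr hBval, intervalIntegral.integral_const_mul]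
  -- assemble the derivative value
  have hval : (1 / 2 : ℝ) * (∫ x in (0 : ℝ)..L, 2 * ⟪D2 (t, x), D12 (t, x)⟫)
      = -ν * ∫ x in (0 : ℝ)..L, ‖cross3 (m t x) (mxx m t x)‖ ^ 2 := by
    rw [intervalIntegral.integral_const_mul]
    have : (∫ x in (0 : ℝ)..L, ⟪D2 (t, x), D12 (t, x)⟫) = ∫ x in (0 : ℝ)..L, A x := rfl
    rw [this, hAB, hintBval]
    ring
  constructor
  · have hfun : (fun s => (1 / 2 : ℝ) * ∫ x in (0 : ℝ)..L, ‖deriv (m s) x‖ ^ 2)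
        = fun s => (1 / 2 : ℝ) * ∫ x in (0 : ℝ)..L, ‖D2 (s, x)‖ ^ 2 := by
      funext s
      congr 1
      apply intervalIntegral.integral_congr
      intro x _
      simp only [hder2]
    rw [hfun, ← hval]
    exact (hDUI.const_mul (1 / 2 : ℝ)).hasDerivWithinAt
  · have hnn : 0 ≤ ∫ x in (0 : ℝ)..L, ‖cross3 (m t x) (mxx m t x)‖ ^ 2 :=
      intervalIntegral.integral_nonneg hL.le (fun x _ => by positivity)
    have : 0 ≤ ν * ∫ x in (0 : ℝ)..L, ‖cross3 (m t x) (mxx m t x)‖ ^ 2 :=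
      mul_nonneg hν hnn
    linarith
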